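/- Let Ω > 0, ε > 0, let J ⊂ ℤ be a finite set, and let T satisfy 0 < T ≤ π/(Ω + ε). If φ, ψ ∈ PW_Ω satisfy φ(kT) = ψ(kT) for every k ∈ ℤ \ J, then φ = ψ. That is, any function in the Paley–Wiener space PW_Ω is uniquely characterized by its samples on the grid T·(ℤ \ J). -/

import Mathlib

open MeasureTheory Real

/-- Membership in the Paley–Wiener space `PW_Ω`: `g(t) = ∫_{−Ω}^{Ω} φ(ω) e^{iωt} dω`
for some square-integrable `φ : [−Ω,Ω] → ℂ`. -/
def IsPW (Ω : ℝ) (g : ℝ → ℝ) : Prop :=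
  ∃ φ : ℝ → ℂ, MemLp φ 2 (volume.restrict (Set.Icc (-Ω) Ω)) ∧
    ∀ t : ℝ, (g t : ℂ) =
      ∫ ω in Set.Icc (-Ω) Ω, φ ω * Complex.exp (Complex.I * (ω : ℂ) * (t : ℂ))

section Helpers
open Set Complex

lemma keyA {a b : ℝ} (hab : a < b) (f : ℝ → ℂ)
    (hf : MemLp f 2 (volume.restrict (Set.Ioc a b)))
    (h0 : ∀ n : ℤ, fourierCoeffOn hab f n = 0) :
    f =ᵐ[volume.restrict (Set.Ioc a b)] 0 := by
  haveI : Fact (0 < b - a) := ⟨by linarith⟩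
  have hb : a + (b - a) = b := by ring
  -- strongly measurable representative
  set f' : ℝ → ℂ := hf.1.mk f with hf'def
  have hff' : f =ᵐ[volume.restrict (Set.Ioc a b)] f' := hf.1.ae_eq_mk
  have hf'sm : StronglyMeasurable f' := hf.1.stronglyMeasurable_mk
  have hf'mem : MemLp f' 2 (volume.restrict (Set.Ioc a b)) := (memLp_congr_ae hff').mp hf
  have hcoeff' : ∀ n : ℤ, fourierCoeffOn hab f' n = 0 := by
    intro n
    rw [← h0 n, fourierCoeffOn_eq_integral, fourierCoeffOn_eq_integral]
    congr 1
    apply intervalIntegral.integral_congr_ae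
    rw [Set.uIoc_of_le hab.le]
    have := (ae_restrict_iff' (measurableSet_Ioc (a := a) (b := b))).mp hff'.symm
    filter_upwards [this] with x hx hx2
    rw [hx hx2]
  set F : AddCircle (b - a) → ℂ := AddCircle.liftIoc (b - a) a f' with hFdef
  have hmp := AddCircle.measurePreserving_mk (b - a) a
  rw [hb] at hmp
  have hFsm : StronglyMeasurable F := by
    have : F = (f' ∘ (fun x : Set.Ioc a (a + (b - a)) => (x : ℝ))) ∘
        (AddCircle.measurableEquivIoc (b - a) a) := rfl
    rw [this]
    exact (hf'sm.comp_measurable measurable_subtype_coe).comp_measurable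
      (AddCircle.measurableEquivIoc (b - a) a).measurable
  have hFcomp : (fun x : ℝ => F x) =ᵐ[volume.restrict (Set.Ioc a b)] f' :=
    (ae_restrict_iff' measurableSet_Ioc).mpr (ae_of_all _ fun x hx =>
      AddCircle.liftIoc_coe_apply (show x ∈ Set.Ioc a (a + (b - a)) by rw [hb]; exact hx))
  -- MemLp on the circle (volume)
  have hFvol : MemLp F 2 (volume : Measure (AddCircle (b - a))) := by
    rw [← hmp.map_eq]
    exact (memLp_map_measure_iff hFsm.aestronglyMeasurable
      hmp.measurable.aemeasurable).mpr ((memLp_congr_ae hFcomp).mpr hf'mem)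
  -- MemLp w.r.t. haarAddCircle
  have hvolsmul := AddCircle.volume_eq_smul_haarAddCircle (T := b - a)
  have hc0 : (ENNReal.ofReal (b - a)) ≠ 0 := by
    simp only [ne_eq, ENNReal.ofReal_eq_zero, not_le]; linarith
  have hFhaar : MemLp F 2 (AddCircle.haarAddCircle (T := b - a)) := by
    have h2 := hFvol.smul_measure (c := (ENNReal.ofReal (b - a))⁻¹)
      (by simp [ENNReal.inv_ne_top, hc0])
    rwa [hvolsmul, smul_smul, ENNReal.inv_mul_cancel hc0 ENNReal.ofReal_ne_top,
      one_smul] at h2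
  -- pass to L²
  set G := hFhaar.toLp F with hGdef
  have hGcoeff : ∀ n : ℤ, fourierCoeff (G : AddCircle (b - a) → ℂ) n = 0 := by
    intro n
    have h1 : fourierCoeff (G : AddCircle (b - a) → ℂ) n = fourierCoeff F n := by
      unfold fourierCoeff
      apply integral_congr_ae
      filter_upwards [hFhaar.coeFn_toLp] with x hx
      rw [hx]
    rw [h1, hFdef, fourierCoeff_liftIoc_eq]
    have hco : fourierCoeffOn (lt_add_of_pos_right a (Fact.out : 0 < b - a)) f' n
        = fourierCoeffOn hab f' n := by
      congr 1 <;> try rw [hb]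
    rw [hco]
    exact hcoeff' n
  have hG0 : G = 0 := by
    apply (fourierBasis (T := b - a)).repr.injective
    ext n
    rw [fourierBasis_repr, hGcoeff n]
    simp
  have hFae : F =ᵐ[AddCircle.haarAddCircle (T := b - a)] 0 := by
    have h1 : F =ᵐ[AddCircle.haarAddCircle (T := b - a)] (G : AddCircle (b - a) → ℂ) :=
      hFhaar.coeFn_toLp.symm
    have h2 : (G : AddCircle (b - a) → ℂ) =ᵐ[AddCircle.haarAddCircle (T := b - a)] 0 := by
      rw [hG0]; exact Lp.coeFn_zero _ _ _
    exact h1.trans h2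
  have hFvol0 : F =ᵐ[(volume : Measure (AddCircle (b - a)))] 0 := by
    rw [hvolsmul]
    exact Measure.ae_smul_measure hFae _
  -- pull back
  have hcomp0 : (fun x : ℝ => F x) =ᵐ[volume.restrict (Set.Ioc a b)] 0 := by
    have := ae_eq_comp (f := (QuotientAddGroup.mk : ℝ → AddCircle (b - a)))
      (μ := volume.restrict (Set.Ioc a b)) hmp.measurable.aemeasurable
      (g := F) (g' := 0) (by rw [hmp.map_eq]; exact hFvol0)
    exact this
  exact hff'.trans (hFcomp.symm.trans hcomp0)

lemma keyB {T L : ℝ} (hT0 : 0 < T) (hL0 : 0 < L) (hTL : T * L = π)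
    (h2L : -L < L) (m n : ℤ) :
    fourierCoeffOn h2L (fun x : ℝ => Complex.exp (Complex.I * m * T * x)) n
      = if m = n then 1 else 0 := by
  rw [fourierCoeffOn_eq_integral]
  have hπ : (π : ℂ) = (T : ℂ) * (L : ℂ) := by rw [← hTL]; push_cast; ring
  have hLne : (L : ℂ) ≠ 0 := by exact_mod_cast hL0.ne'
  have hTne : (T : ℂ) ≠ 0 := by exact_mod_cast hT0.ne'
  have hint : ∀ x : ℝ, (fourier (-n) (x : AddCircle (L - -L))) •
      Complex.exp (Complex.I * m * T * x) = Complex.exp ((Complex.I * (m - n) * T) * x) := by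
    intro x
    rw [fourier_coe_apply, smul_eq_mul, ← Complex.exp_add]
    congr 1
    have : ((L - -L : ℝ) : ℂ) = 2 * L := by push_cast; ring
    rw [this]
    field_simp
    rw [hπ]
    push_cast
    ring
  simp_rw [hint]
  by_cases hmn : m = n
  · subst hmn
    simp only [sub_self, mul_zero, zero_mul, mul_comm, Complex.exp_zero]
    norm_num
    have hne : (L : ℂ) + L ≠ 0 := by
      intro h
      apply hLne
      have : (2 : ℂ) * L = 0 := by rw [← h]; ring
      simpa using this
    field_simp
  · rw [if_neg hmn]
    have hc : Complex.I * (m - n) * T ≠ 0 := by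
      apply mul_ne_zero (mul_ne_zero Complex.I_ne_zero _) hTne
      simpa [sub_eq_zero] using fun h => hmn (by exact_mod_cast h)
    rw [integral_exp_mul_complex hc]
    have hexp : Complex.exp (Complex.I * (m - n) * T * L)
        = Complex.exp (Complex.I * (m - n) * T * (-L : ℝ)) := by
      rw [show Complex.I * (m - n) * T * (L : ℂ) =
        Complex.I * (m - n) * T * ((-L : ℝ) : ℂ) + ((m - n : ℤ) : ℂ) * (2 * π * Complex.I) by
          push_cast; rw [hπ]; ring]
      rw [Complex.exp_add, Complex.exp_int_mul_two_pi_mul_I, mul_one]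
    rw [hexp, sub_self, zero_div, smul_zero]

lemma fourier_cont {T : ℝ} [hT : Fact (0 < T)] (n : ℤ) :
    Continuous (fun x : ℝ => (fourier (n := n) (T := T)) (x : AddCircle T)) :=
  (fourier n).continuous.comp (AddCircle.continuous_mk' T)

lemma keyD {a b : ℝ} (hab : a < b) (f g : ℝ → ℂ)
    (hf : IntegrableOn f (Set.Ioc a b)) (hg : Continuous g) (n : ℤ) :
    fourierCoeffOn hab (fun x => f x - g x) n =
      fourierCoeffOn hab f n - fourierCoeffOn hab g n := by
  haveI : Fact (0 < b - a) := ⟨by linarith⟩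
  rw [fourierCoeffOn_eq_integral, fourierCoeffOn_eq_integral, fourierCoeffOn_eq_integral]
  rw [← smul_sub]
  congr 1
  have hfi : IntervalIntegrable (fun x => (fourier (-n) (x : AddCircle (b - a))) • f x)
      volume a b := by
    exact IntervalIntegrable.continuousOn_mul
      ((intervalIntegrable_iff_integrableOn_Ioc_of_le hab.le).mpr hf)
      ((fourier_cont (-n)).continuousOn)
  have hgi : IntervalIntegrable (fun x => (fourier (-n) (x : AddCircle (b - a))) • g x)
      volume a b :=
    (Continuous.mul (fourier_cont (-n)) hg).intervalIntegrable a b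
  rw [← intervalIntegral.integral_sub hfi hgi]
  congr 1
  ext x
  rw [smul_sub]

lemma keyC {ι : Type*} {a b : ℝ} (hab : a < b) (s : Finset ι) (c : ι → ℂ) (f : ι → ℝ → ℂ)
    (hf : ∀ i, Continuous (f i)) (n : ℤ) :
    fourierCoeffOn hab (fun x => ∑ j ∈ s, c j * f j x) n =
      ∑ j ∈ s, c j * fourierCoeffOn hab (f j) n := by
  haveI : Fact (0 < b - a) := ⟨by linarith⟩
  simp_rw [fourierCoeffOn_eq_integral]
  have : ∀ x : ℝ, (fourier (-n) (x : AddCircle (b - a))) • ∑ j ∈ s, c j * f j x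
      = ∑ j ∈ s, c j * ((fourier (-n) (x : AddCircle (b - a))) • f j x) := by
    intro x
    rw [smul_eq_mul, Finset.mul_sum]
    refine Finset.sum_congr rfl fun j _ => by rw [smul_eq_mul]; ring
  simp_rw [this]
  rw [intervalIntegral.integral_finset_sum (μ := volume) (a := a) (b := b) (s := s) (fun j _ => by
    exact (Continuous.mul continuous_const ((fourier_cont (-n)).mul (hf j))).intervalIntegrable a b)]
  rw [Finset.smul_sum]
  refine Finset.sum_congr rfl fun j _ => ?_
  rw [intervalIntegral.integral_const_mul, Complex.real_smul, Complex.real_smul]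
  ring
end Helpers

theorem stmt9 (Ω ε T : ℝ) (hΩ : 0 < Ω) (hε : 0 < ε) (J : Finset ℤ)
    (hT0 : 0 < T) (hT : T ≤ π / (Ω + ε))
    (φ ψ : ℝ → ℝ) (hφ : IsPW Ω φ) (hψ : IsPW Ω ψ)
    (heq : ∀ k : ℤ, k ∉ J → φ (k * T) = ψ (k * T)) :
    φ = ψ := by
  obtain ⟨φ₀, hφ₀, hφrep⟩ := hφ
  obtain ⟨ψ₀, hψ₀, hψrep⟩ := hψ
  have hπ := Real.pi_pos
  set L := π / T with hLdef
  have hL0 : 0 < L := div_pos hπ hT0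
  have hΩεL : Ω + ε ≤ L := by
    rw [hLdef, le_div_iff₀ hT0]
    calc (Ω + ε) * T ≤ (Ω + ε) * (π / (Ω + ε)) :=
          mul_le_mul_of_nonneg_left hT (by positivity)
      _ = π := by field_simp
  have hΩL : Ω < L := by linarith
  have hTL : T * L = π := by rw [hLdef]; field_simp
  have h2L : -L < L := by linarith
  haveI finIcc : IsFiniteMeasure (volume.restrict (Set.Icc (-Ω) Ω)) := ⟨by
    rw [Measure.restrict_apply_univ, Real.volume_Icc]; exact ENNReal.ofReal_lt_top⟩
  set u : ℝ → ℂ := fun ω => φ₀ ω - ψ₀ ω with hudef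
  have hu : MemLp u 2 (volume.restrict (Set.Icc (-Ω) Ω)) := hφ₀.sub hψ₀
  have huI : IntegrableOn u (Set.Icc (-Ω) Ω) := hu.integrable (by norm_num)
  set v : ℝ → ℂ := Set.indicator (Set.Icc (-Ω) Ω) u with hvdef
  have hIccsub : Set.Icc (-Ω) Ω ⊆ Set.Ioc (-L) L := fun x hx => by
    obtain ⟨h1, h2⟩ := hx
    exact ⟨by linarith, by linarith⟩
  have hvint : Integrable v volume := huI.integrable_indicator measurableSet_Icc
  -- boundedness of the exponential with imaginary exponent
  have hexpnorm : ∀ (ωt : ℝ) (c : ℂ), c.re = 0 → ‖Complex.exp c‖ = 1 := by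
    intro _ c hc
    rw [Complex.norm_exp, hc, Real.exp_zero]
  have hbint : ∀ (h : ℝ → ℂ), Integrable h (volume.restrict (Set.Icc (-Ω) Ω)) → ∀ t : ℝ,
      Integrable (fun ω : ℝ => h ω * Complex.exp (Complex.I * ω * t))
        (volume.restrict (Set.Icc (-Ω) Ω)) := by
    intro h hh t
    have hmeas : AEStronglyMeasurable (fun ω : ℝ => Complex.exp (Complex.I * ω * t))
        (volume.restrict (Set.Icc (-Ω) Ω)) := by
      apply Continuous.aestronglyMeasurable
      exact Complex.continuous_exp.comp ((continuous_const.mul Complex.continuous_ofReal).mul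
        continuous_const)
    refine (Integrable.bdd_mul hh hmeas (c := 1) (Filter.Eventually.of_forall fun ω => ?_)).congr
      (Filter.Eventually.of_forall fun ω => mul_comm _ _)
    rw [hexpnorm ω _ (by simp)]
  -- representation of the difference
  have hg : ∀ t : ℝ, ((φ t - ψ t : ℝ) : ℂ)
      = ∫ ω in Set.Icc (-Ω) Ω, u ω * Complex.exp (Complex.I * ω * t) := by
    intro t
    rw [Complex.ofReal_sub, hφrep t, hψrep t,
      ← integral_sub (hbint φ₀ (hφ₀.integrable (by norm_num)) t)
        (hbint ψ₀ (hψ₀.integrable (by norm_num)) t)]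
    exact integral_congr_ae (Filter.Eventually.of_forall fun ω => by
      simp only [hudef]; ring)
  -- Fourier coefficients of v
  have hveq : ∀ n : ℤ, fourierCoeffOn h2L v n
      = (1 / (L - -L)) • ((φ (((-n : ℤ) : ℝ) * T) - ψ (((-n : ℤ) : ℝ) * T) : ℝ) : ℂ) := by
    intro n
    rw [fourierCoeffOn_eq_integral]
    congr 1
    rw [intervalIntegral.integral_of_le h2L.le]
    have hptwise : ∀ x : ℝ, (fourier (-n) (x : AddCircle (L - -L))) • v x
        = Set.indicator (Set.Icc (-Ω) Ω)
            (fun ω : ℝ => u ω * Complex.exp (Complex.I * ω * ((((-n : ℤ) : ℝ) * T : ℝ) : ℂ))) x := by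
      intro x
      by_cases hx : x ∈ Set.Icc (-Ω) Ω
      · rw [hvdef, Set.indicator_of_mem hx, Set.indicator_of_mem hx, smul_eq_mul,
          fourier_coe_apply, mul_comm]
        congr 1
        have hgt : (0:ℝ) < L - -L := by linarith
        have h2Lne : ((L - -L : ℝ) : ℂ) ≠ 0 := by exact_mod_cast hgt.ne'
        have hπC : (π : ℂ) = (T : ℂ) * L := by exact_mod_cast hTL.symm
        congr 1
        rw [div_eq_iff h2Lne]
        push_cast
        rw [hπC]
        ring
      · rw [hvdef, Set.indicator_of_notMem hx, Set.indicator_of_notMem hx, smul_zero]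
    rw [MeasureTheory.integral_congr_ae (Filter.Eventually.of_forall hptwise),
      MeasureTheory.setIntegral_indicator measurableSet_Icc,
      Set.inter_eq_self_of_subset_right hIccsub]
    rw [← hg (((-n : ℤ) : ℝ) * T)]
  -- samples vanish
  have hvJ : ∀ n : ℤ, -n ∉ J → fourierCoeffOn h2L v n = 0 := by
    intro n hn
    rw [hveq n, heq (-n) hn, sub_self, Complex.ofReal_zero, smul_zero]
  set d : ℤ → ℂ := fun n => fourierCoeffOn h2L v n with hddef
  set P : ℝ → ℂ := fun x => ∑ j ∈ J, d (-j) * Complex.exp (Complex.I * ((-j : ℤ) : ℂ) * T * x)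
    with hPdef
  have hexpcont : ∀ c : ℂ, Continuous (fun x : ℝ => Complex.exp (c * x)) := fun c =>
    Complex.continuous_exp.comp (continuous_const.mul Complex.continuous_ofReal)
  have hPcont : Continuous P := by
    rw [hPdef]
    apply continuous_finset_sum
    intro j _
    have := hexpcont (Complex.I * ((-j : ℤ) : ℂ) * T)
    simp_rw [mul_assoc] at this ⊢
    exact continuous_const.mul this
  have hPcoeff : ∀ n : ℤ, fourierCoeffOn h2L P n = if -n ∈ J then d n else 0 := by
    intro n
    rw [hPdef]
    rw [keyC h2L J (fun j => d (-j))
      (fun j => fun x : ℝ => Complex.exp (Complex.I * ((-j : ℤ) : ℂ) * T * x))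
      (fun j => by
        have := hexpcont (Complex.I * ((-j : ℤ) : ℂ) * T)
        simp_rw [mul_assoc] at this ⊢
        exact this) n]
    have : ∀ j ∈ J, d (-j) * fourierCoeffOn h2L
        (fun x : ℝ => Complex.exp (Complex.I * ((-j : ℤ) : ℂ) * T * x)) n
        = if j = -n then d (-j) else 0 := by
      intro j _
      rw [keyB hT0 hL0 hTL h2L (-j) n]
      by_cases hj : j = -n
      · rw [if_pos hj, if_pos (by rw [hj]; ring), mul_one]
      · rw [if_neg hj, if_neg (by intro h; exact hj (by omega)), mul_zero]
    rw [Finset.sum_congr rfl this, Finset.sum_ite_eq' J (-n) (fun j => d (-j))]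
    by_cases h : -n ∈ J
    · rw [if_pos h, if_pos h, neg_neg]
    · rw [if_neg h, if_neg h]
  have hsub : ∀ n : ℤ, fourierCoeffOn h2L (fun x => v x - P x) n = 0 := by
    intro n
    rw [keyD h2L v P hvint.integrableOn hPcont n, hPcoeff n]
    by_cases h : -n ∈ J
    · rw [if_pos h, sub_self]
    · rw [if_neg h, sub_zero, hvJ n h]
  -- MemLp facts on Ioc (-L) L
  haveI finIoc : IsFiniteMeasure (volume.restrict (Set.Ioc (-L) L)) := ⟨by
    rw [Measure.restrict_apply_univ, Real.volume_Ioc]; exact ENNReal.ofReal_lt_top⟩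
  have hvmem : MemLp v 2 (volume.restrict (Set.Ioc (-L) L)) := by
    rw [hvdef, memLp_indicator_iff_restrict measurableSet_Icc,
      Measure.restrict_restrict measurableSet_Icc,
      Set.inter_eq_self_of_subset_left hIccsub]
    exact hu
  have hPmem : MemLp P 2 (volume.restrict (Set.Ioc (-L) L)) := by
    apply MemLp.of_bound hPcont.aestronglyMeasurable (∑ j ∈ J, ‖d (-j)‖)
    apply Filter.Eventually.of_forall
    intro x
    rw [hPdef]
    refine le_trans (norm_sum_le _ _) (Finset.sum_le_sum fun j _ => ?_)
    rw [norm_mul, hexpnorm x _ (by simp), mul_one]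
  have hae := keyA h2L _ (hvmem.sub hPmem) hsub
  have hvPae : v =ᵐ[volume.restrict (Set.Ioc (-L) L)] P := by
    filter_upwards [hae] with x hx
    exact sub_eq_zero.mp hx
  -- P vanishes a.e. on Ioo Ω L
  have hP0ae : ∀ᵐ x ∂volume, x ∈ Set.Ioo Ω L → P x = 0 := by
    have hsub2 : Set.Ioo Ω L ⊆ Set.Ioc (-L) L := by
      intro x hx
      obtain ⟨ha, hb⟩ := hx
      exact ⟨by linarith, by linarith⟩
    have h1 : v =ᵐ[volume.restrict (Set.Ioo Ω L)] P :=
      ae_restrict_of_ae_restrict_of_subset hsub2 hvPae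
    have h2 : ∀ x ∈ Set.Ioo Ω L, v x = 0 := fun x hx => by
      rw [hvdef, Set.indicator_of_notMem (fun h : x ∈ Set.Icc (-Ω) Ω =>
        absurd h.2 (not_le.mpr hx.1))]
    rw [← ae_restrict_iff' measurableSet_Ioo]
    filter_upwards [h1, ae_restrict_mem measurableSet_Ioo] with x hx hmem
    rw [← hx, h2 x hmem]
  -- P vanishes identically on Ioo Ω L by continuity
  have hPIoo : ∀ x ∈ Set.Ioo Ω L, P x = 0 := by
    set N := Set.Ioo Ω L ∩ {x | P x ≠ 0} with hNdef
    have hNopen : IsOpen N := isOpen_Ioo.inter (isOpen_compl_singleton.preimage hPcont)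
    have hN0 : volume N = 0 := by
      rw [ae_iff] at hP0ae
      refine measure_mono_null (fun x hx => ?_) hP0ae
      obtain ⟨h1, h2⟩ := hx
      simp only [Set.mem_setOf_eq, Classical.not_imp]
      exact ⟨h1, h2⟩
    have hNe := hNopen.eq_empty_of_measure_zero hN0
    intro x hx
    by_contra hPx
    exact absurd (hNe ▸ (Set.mem_inter hx hPx : x ∈ N)) (Set.notMem_empty x)
  -- analyticity and identity theorem
  have hPanal : AnalyticOnNhd ℝ P Set.univ := by
    set Q : ℂ → ℂ := fun z => ∑ j ∈ J, d (-j) * Complex.exp (Complex.I * ((-j : ℤ) : ℂ) * T * z)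
      with hQdef
    have hQd : Differentiable ℂ Q := by
      rw [hQdef]
      apply Differentiable.fun_sum
      intro j _
      apply Differentiable.const_mul
      exact (differentiable_id.const_mul (Complex.I * ((-j : ℤ) : ℂ) * T)).cexp
    have hQa : AnalyticOnNhd ℂ Q Set.univ := fun z _ => hQd.analyticAt z
    have hPQ : P = Q ∘ (Complex.ofRealCLM : ℝ →L[ℝ] ℂ) := by
      funext x
      simp only [hPdef, hQdef, Function.comp_apply, Complex.ofRealCLM_apply]
    rw [hPQ]
    exact (hQa.restrictScalars).comp ((Complex.ofRealCLM : ℝ →L[ℝ] ℂ).analyticOnNhd Set.univ)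
      (Set.mapsTo_univ _ _)
  have hPzero : ∀ x : ℝ, P x = 0 := by
    have hev : P =ᶠ[nhds ((Ω + L) / 2)] 0 := by
      apply Filter.eventuallyEq_of_mem (isOpen_Ioo.mem_nhds
        (⟨by linarith, by linarith⟩ : (Ω + L) / 2 ∈ Set.Ioo Ω L))
      intro x hx
      exact hPIoo x hx
    intro x
    exact hPanal.eqOn_zero_of_preconnected_of_eventuallyEq_zero isPreconnected_univ
      (Set.mem_univ ((Ω + L) / 2)) hev (Set.mem_univ x)
  -- conclude
  have hv0 : v =ᵐ[volume.restrict (Set.Ioc (-L) L)] 0 :=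
    hvPae.trans (Filter.Eventually.of_forall fun x => hPzero x)
  have hgt : ∀ t : ℝ, ((φ t - ψ t : ℝ) : ℂ) = 0 := by
    intro t
    rw [hg t]
    have hstep : ∫ ω in Set.Icc (-Ω) Ω, u ω * Complex.exp (Complex.I * ω * t)
        = ∫ x in Set.Ioc (-L) L, Set.indicator (Set.Icc (-Ω) Ω)
            (fun ω : ℝ => u ω * Complex.exp (Complex.I * ω * t)) x := by
      rw [MeasureTheory.setIntegral_indicator measurableSet_Icc,
        Set.inter_eq_self_of_subset_right hIccsub]
    rw [hstep]
    have : ∀ᵐ x ∂(volume.restrict (Set.Ioc (-L) L)), Set.indicator (Set.Icc (-Ω) Ω)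
        (fun ω : ℝ => u ω * Complex.exp (Complex.I * ω * t)) x = 0 := by
      filter_upwards [hv0] with x hx
      rw [Set.indicator_mul_left, ← hvdef]
      rw [show v x = 0 from hx, zero_mul]
    rw [integral_congr_ae this, integral_zero]
  funext t
  have h1 := hgt t
  rw [Complex.ofReal_eq_zero] at h1
  linarith [h1]
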